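/- Let x₁ ≥ x₂ ≥ ... ≥ x_m be a citation vector, h its h-index and ν its ν-index, with m*(j) = #{i : x_i ≥ j} and S_k = x₁ + ... + x_k (S_0 = 0). Then h = ν if and only if S_{m*(h+1)} < (h+1)². -/
import Mathlib


open Finset

/-- Partial sum `S_k = x₁ + ⋯ + x_k` of a citation vector, with the natural
extension `S_k = S_m` for `k > m`. -/
def pSum {m : ℕ} (x : Fin m → ℕ) (k : ℕ) : ℕ :=
  ∑ i : Fin m, if (i : ℕ) < k then x i else 0

/-- `m*(j)`: the number of papers with at least `j` citations. -/
def mStar {m : ℕ} (x : Fin m → ℕ) (j : ℕ) : ℕ :=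
  (Finset.univ.filter fun i => j ≤ x i).card

/-- The Hirsch `h`-index: `h = max {j ≥ 1 : m*(j) ≥ j}` (max ∅ = 0). -/
noncomputable def hIndex {m : ℕ} (x : Fin m → ℕ) : ℕ :=
  sSup {j : ℕ | 1 ≤ j ∧ j ≤ mStar x j}

/-- The Egghe `g`-index: `g = max {1 ≤ k ≤ m : S_k ≥ k²}` (max ∅ = 0). -/
noncomputable def gIndex {m : ℕ} (x : Fin m → ℕ) : ℕ :=
  sSup {k : ℕ | 1 ≤ k ∧ k ≤ m ∧ k ^ 2 ≤ pSum x k}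

/-- The unconstrained `g*`-index: `g* = max {k ≥ 1 : S_k ≥ k²}` (max ∅ = 0). -/
noncomputable def gStar {m : ℕ} (x : Fin m → ℕ) : ℕ :=
  sSup {k : ℕ | 1 ≤ k ∧ k ^ 2 ≤ pSum x k}

/-- The `ν`-index: `ν = max {j ≥ 1 : Σ_{i : x_i ≥ j} x_i ≥ j²}` (max ∅ = 0). -/
noncomputable def nuIndex {m : ℕ} (x : Fin m → ℕ) : ℕ :=
  sSup {j : ℕ | 1 ≤ j ∧ j ^ 2 ≤ ∑ i ∈ Finset.univ.filter (fun i => j ≤ x i), x i}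

/-- The tempered `ν̄`-index: `ν̄ = max {1 ≤ j ≤ m : Σ_{i : x_i ≥ j} x_i ≥ j²}` (max ∅ = 0). -/
noncomputable def nuBar {m : ℕ} (x : Fin m → ℕ) : ℕ :=
  sSup {j : ℕ | 1 ≤ j ∧ j ≤ m ∧ j ^ 2 ≤ ∑ i ∈ Finset.univ.filter (fun i => j ≤ x i), x i}

/-- The parametric index `ν_α = max {j ≥ 1 : Σ_{i : x_i ≥ j} x_i^α ≥ j^(α+1)}` (max ∅ = 0),
with real powers. -/
noncomputable def nuAlpha {m : ℕ} (x : Fin m → ℕ) (α : ℝ) : ℕ :=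
  sSup {j : ℕ | 1 ≤ j ∧
    (j : ℝ) ^ (α + 1) ≤ ∑ i ∈ Finset.univ.filter (fun i => j ≤ x i), (x i : ℝ) ^ α}

/-- Extension of a finite citation vector by fictitious zeros. -/
def extByZero {m : ℕ} (x : Fin m → ℕ) (i : ℕ) : ℕ :=
  if h : i < m then x ⟨i, h⟩ else 0


lemma mem_filter_iff_lt {m : ℕ} (x : Fin m → ℕ) (hx : Antitone x) (j : ℕ) (i : Fin m) :
    j ≤ x i ↔ (i : ℕ) < mStar x j := by
  constructor
  · intro hji
    have hsub : Finset.Iic i ⊆ Finset.univ.filter fun i' => j ≤ x i' := by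
      intro i' hi'
      simp only [Finset.mem_Iic] at hi'
      exact Finset.mem_filter.mpr ⟨Finset.mem_univ _, le_trans hji (hx hi')⟩
    have := Finset.card_le_card hsub
    rw [Fin.card_Iic] at this
    unfold mStar
    omega
  · intro hlt
    by_contra hni
    have hsub : (Finset.univ.filter fun i' => j ≤ x i') ⊆ Finset.Iio i := by
      intro i' hi'
      simp only [Finset.mem_filter] at hi'
      simp only [Finset.mem_Iio]
      by_contra hge
      exact hni (le_trans hi'.2 (hx (le_of_not_gt hge)))
    have := Finset.card_le_card hsub
    rw [Fin.card_Iio] at this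
    unfold mStar at hlt
    omega

lemma fSum_anti {m : ℕ} (x : Fin m → ℕ) {j j' : ℕ} (hjj : j ≤ j') :
    ∑ i ∈ Finset.univ.filter (fun i => j' ≤ x i), x i ≤
      ∑ i ∈ Finset.univ.filter (fun i => j ≤ x i), x i := by
  apply Finset.sum_le_sum_of_subset
  intro i hi
  simp only [Finset.mem_filter] at hi ⊢
  exact ⟨hi.1, le_trans hjj hi.2⟩

theorem stmt9 {m : ℕ} (hm : 1 ≤ m) (x : Fin m → ℕ) (hx : Antitone x) :
    hIndex x = nuIndex x ↔
      pSum x (mStar x (hIndex x + 1)) < (hIndex x + 1) ^ 2 := by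
  set h := hIndex x with hh
  have key : pSum x (mStar x (h + 1)) =
      ∑ i ∈ Finset.univ.filter (fun i => h + 1 ≤ x i), x i := by
    unfold pSum
    rw [← Finset.sum_filter]
    congr 1
    apply Finset.filter_congr
    intro i _
    simpa using (mem_filter_iff_lt x hx (h + 1) i).symm
  rw [key]
  have bddNu : BddAbove {j : ℕ | 1 ≤ j ∧
      j ^ 2 ≤ ∑ i ∈ Finset.univ.filter (fun i => j ≤ x i), x i} := by
    refine ⟨∑ i : Fin m, x i, fun j hj => ?_⟩
    obtain ⟨hj1, hj2⟩ := hj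
    have h1 : j ≤ j ^ 2 := Nat.le_self_pow two_ne_zero j
    have h2 : ∑ i ∈ Finset.univ.filter (fun i => j ≤ x i), x i ≤ ∑ i : Fin m, x i :=
      Finset.sum_le_sum_of_subset (Finset.filter_subset _ _)
    omega
  have nu_ge : h ≤ nuIndex x := by
    rcases Nat.eq_zero_or_pos h with h0 | h1
    · omega
    · have hne : {j : ℕ | 1 ≤ j ∧ j ≤ mStar x j}.Nonempty := by
        by_contra hemp
        rw [Set.not_nonempty_iff_eq_empty] at hemp
        rw [hh] at h1
        unfold hIndex at h1
        rw [hemp, csSup_empty] at h1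
        exact absurd h1 (by simp)
      have hbdd : BddAbove {j : ℕ | 1 ≤ j ∧ j ≤ mStar x j} := by
        refine ⟨m, fun j hj => ?_⟩
        obtain ⟨hja, hjb⟩ := hj
        have : mStar x j ≤ m := by
          unfold mStar
          calc (Finset.univ.filter fun i => j ≤ x i).card ≤ (Finset.univ : Finset (Fin m)).card :=
                Finset.card_filter_le _ _
            _ = m := by simp
        omega
      have hmem : h ∈ {j : ℕ | 1 ≤ j ∧ j ≤ mStar x j} := by
        rw [hh]; unfold hIndex
        exact Nat.sSup_mem hne hbdd
      obtain ⟨hm1, hm2⟩ := hmem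
      have hnu : h ∈ {j : ℕ | 1 ≤ j ∧
          j ^ 2 ≤ ∑ i ∈ Finset.univ.filter (fun i => j ≤ x i), x i} := by
        refine ⟨hm1, ?_⟩
        have hcard : (Finset.univ.filter fun i => h ≤ x i).card • h ≤
            ∑ i ∈ Finset.univ.filter (fun i => h ≤ x i), x i := by
          apply Finset.card_nsmul_le_sum
          intro i hi
          exact (Finset.mem_filter.mp hi).2
        have : h * h ≤ mStar x h * h := Nat.mul_le_mul_right h hm2
        calc h ^ 2 = h * h := sq h
          _ ≤ mStar x h * h := this
          _ = (Finset.univ.filter fun i => h ≤ x i).card • h := by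
              unfold mStar; rw [smul_eq_mul]
          _ ≤ _ := hcard
      exact le_csSup bddNu hnu
  constructor
  · intro heq
    by_contra hge
    push_neg at hge
    have hmem : h + 1 ∈ {j : ℕ | 1 ≤ j ∧
        j ^ 2 ≤ ∑ i ∈ Finset.univ.filter (fun i => j ≤ x i), x i} := ⟨by omega, hge⟩
    have : h + 1 ≤ nuIndex x := le_csSup bddNu hmem
    omega
  · intro hS
    refine le_antisymm nu_ge ?_
    unfold nuIndex
    apply csSup_le'
    intro j hj
    simp only [Set.mem_setOf_eq] at hj
    obtain ⟨hj1, hj2⟩ := hj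
    by_contra hgt
    push_neg at hgt
    have hle : h + 1 ≤ j := hgt
    have h1 : ∑ i ∈ Finset.univ.filter (fun i => j ≤ x i), x i ≤
        ∑ i ∈ Finset.univ.filter (fun i => h + 1 ≤ x i), x i := fSum_anti x hle
    have h2 : (h + 1) ^ 2 ≤ j ^ 2 := Nat.pow_le_pow_left hle 2
    omega
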